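/- Let P be a real symmetric positive definite n×n matrix, Ω a real symmetric n×n matrix, λ ∈ (0,1), and N = λ·I + Ω P Ω. Then P' = (1/λ)·(P − P Ω N⁻¹ Ω P) is symmetric positive definite. -/

import Mathlib

open Matrix

lemma posDef_smul' {n : ℕ} {A : Matrix (Fin n) (Fin n) ℝ} (hA : A.PosDef) {c : ℝ}
    (hc : 0 < c) : (c • A).PosDef := by
  refine ⟨?_, fun x hx => ?_⟩
  · unfold Matrix.IsHermitian
    rw [conjTranspose_smul, hA.1.eq]
    norm_num
  · have h := smul_pos hc (hA.2 hx)
    simp only [smul_eq_mul, Finsupp.mul_sum, star_trivial] at h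
    simp only [Matrix.smul_apply, smul_eq_mul, star_trivial]
    exact h.trans_eq (Finsupp.sum_congr fun i _ => Finsupp.sum_congr fun j _ => by ring)

theorem covariance_update_posDef {n : ℕ} (P Ω : Matrix (Fin n) (Fin n) ℝ)
    (hP : P.PosDef) (hΩ : Ω.IsHermitian) (lam : ℝ) (hlam0 : 0 < lam) (hlam1 : lam < 1)
    (N : Matrix (Fin n) (Fin n) ℝ)
    (hN : N = lam • (1 : Matrix (Fin n) (Fin n) ℝ) + Ω * P * Ω) :
    (lam⁻¹ • (P - P * Ω * N⁻¹ * Ω * P)).PosDef := by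
  have hΩc : Ωᴴ = Ω := hΩ.eq
  have hNpd : N.PosDef := by
    rw [hN]
    refine (posDef_smul' Matrix.PosDef.one hlam0).add_posSemidef ?_
    have := hP.posSemidef.mul_mul_conjTranspose_same Ω
    rwa [hΩc] at this
  have hNN : N * N⁻¹ = 1 := mul_nonsing_inv N hNpd.det_pos.ne'.isUnit
  have hPP : P⁻¹ * P = 1 := nonsing_inv_mul P hP.det_pos.ne'.isUnit
  have e1 : Ω * P * Ω = N - lam • 1 := by rw [hN]; abel
  -- key Woodbury identity
  have key : (P⁻¹ + lam⁻¹ • (Ω * Ω)) * (P - P * Ω * N⁻¹ * Ω * P) = 1 := by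
    have h2 : Ω * Ω * (P * Ω * N⁻¹ * Ω * P)
        = Ω * Ω * P - lam • (Ω * N⁻¹ * Ω * P) := by
      calc Ω * Ω * (P * Ω * N⁻¹ * Ω * P)
          = Ω * ((Ω * P * Ω) * N⁻¹) * (Ω * P) := by noncomm_ring
        _ = Ω * ((N - lam • 1) * N⁻¹) * (Ω * P) := by rw [e1]
        _ = Ω * (N * N⁻¹) * (Ω * P) - lam • (Ω * N⁻¹ * (Ω * P)) := by noncomm_ring
        _ = Ω * Ω * P - lam • (Ω * N⁻¹ * Ω * P) := by rw [hNN]; noncomm_ring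
    have h1 : P⁻¹ * (P * Ω * N⁻¹ * Ω * P) = Ω * N⁻¹ * Ω * P := by
      calc P⁻¹ * (P * Ω * N⁻¹ * Ω * P) = (P⁻¹ * P) * (Ω * N⁻¹ * Ω * P) := by noncomm_ring
        _ = Ω * N⁻¹ * Ω * P := by rw [hPP, one_mul]
    rw [add_mul, mul_sub, mul_sub, h1, smul_mul_assoc, smul_mul_assoc, h2, hPP, smul_sub,
      smul_smul, inv_mul_cancel₀ hlam0.ne', one_smul]
    abel
  -- M = P⁻¹ + lam⁻¹ • Ω*Ω is positive definite
  have hM : (P⁻¹ + lam⁻¹ • (Ω * Ω)).PosDef := by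
    refine hP.inv.add_posSemidef ?_
    have h0 := posSemidef_conjTranspose_mul_self Ω
    rw [hΩc] at h0
    refine ⟨?_, fun x => ?_⟩
    · unfold Matrix.IsHermitian
      rw [conjTranspose_smul, h0.1.eq]
      norm_num
    · have h := smul_nonneg (le_of_lt (inv_pos.mpr hlam0)) (h0.2 x)
      simp only [smul_eq_mul, Finsupp.mul_sum, star_trivial] at h
      simp only [Matrix.smul_apply, smul_eq_mul, star_trivial]
      exact h.trans_eq (Finsupp.sum_congr fun i _ => Finsupp.sum_congr fun j _ => by ring)
  have hinv : P - P * Ω * N⁻¹ * Ω * P = (P⁻¹ + lam⁻¹ • (Ω * Ω))⁻¹ :=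
    (inv_eq_right_inv key).symm
  rw [hinv]
  exact posDef_smul' hM.inv (inv_pos.mpr hlam0)
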